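/- For every integer $\ell\ge 3$: every $\ell$-partite graph $G=(V_1\cup\cdots\cup V_\ell,E)$ with $d(V_i,V_j) > \frac{1}{(\ell-1)^2}$ for all $i\ne j$ contains a path with two edges $K_{1,2}$ (a vertex with two neighbours). Consequently $d_\ell(K_{1,2}) \le \frac{1}{(\ell-1)^2}$. -/

import Mathlib

open Finset

/-- Number of edges (ordered pairs) between `A` and `B`. -/
noncomputable def eBetween {V : Type*} (G : SimpleGraph V) (A B : Finset V) : ℕ :=
  Nat.card {p : V × V // p.1 ∈ A ∧ p.2 ∈ B ∧ G.Adj p.1 p.2}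

/-- Edge density between two disjoint vertex sets. -/
noncomputable def density {V : Type*} (G : SimpleGraph V) (A B : Finset V) : ℝ :=
  (eBetween G A B : ℝ) / ((A.card : ℝ) * (B.card : ℝ))

/-- Number of neighbours of `v` inside the set `S`. -/
noncomputable def degTo {V : Type*} (G : SimpleGraph V) (v : V) (S : Set V) : ℕ :=
  Nat.card {u : V // u ∈ S ∧ G.Adj v u}

/-- `G` is an `ℓ`-partite graph with (nonempty, independent) parts `P 0, …, P (ℓ-1)`. -/
def IsPartiteOn {V : Type*} (G : SimpleGraph V) {ℓ : ℕ} (P : Fin ℓ → Finset V) : Prop :=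
  (∀ i, (P i).Nonempty) ∧ (∀ i j, i ≠ j → Disjoint (P i) (P j)) ∧
  (∀ v, ∃ i, v ∈ P i) ∧ ∀ i, ∀ a ∈ P i, ∀ b ∈ P i, ¬ G.Adj a b

/-- `G` contains a copy of `H` (an injective graph homomorphism). -/
def ContainsCopy {W V : Type*} (H : SimpleGraph W) (G : SimpleGraph V) : Prop :=
  ∃ f : W → V, Function.Injective f ∧ ∀ a b, H.Adj a b → G.Adj (f a) (f b)

/-- `H` admits a colouring with `χ(H) - 1` colours in which all colour classes are
independent except the first, which induces a graph of maximum degree at most 1. -/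
def AlmostColourCritical {W : Type*} [Fintype W] (H : SimpleGraph W) : Prop :=
  ∃ k : ℕ, H.chromaticNumber = (k : ℕ∞) ∧
    ∃ φ : W → Fin (k - 1),
      (∀ a b c : W, (φ a).val = 0 → (φ b).val = 0 → (φ c).val = 0 →
        H.Adj a b → H.Adj a c → b = c) ∧
      ∀ a b : W, (φ a).val ≠ 0 → φ a = φ b → ¬ H.Adj a b

theorem star_in_dense_multipartite {V : Type*} [Fintype V] (G : SimpleGraph V)
    (ℓ : ℕ) (hℓ : 3 ≤ ℓ) (P : Fin ℓ → Finset V) (hpart : IsPartiteOn G P)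
    (hdens : ∀ i j, i ≠ j → 1 / ((ℓ : ℝ) - 1) ^ 2 < density G (P i) (P j)) :
    ∃ v a b : V, a ≠ b ∧ G.Adj v a ∧ G.Adj v b := by
  classical
  by_contra hcon
  push_neg at hcon
  have hM : ∀ v a b : V, G.Adj v a → G.Adj v b → a = b := by
    intro v a b h1 h2
    by_contra hne
    exact (hcon v a b hne h1) h2
  obtain ⟨hne, hdisj, hcov, hind⟩ := hpart
  have hpu : ∀ {v : V} {i j : Fin ℓ}, v ∈ P i → v ∈ P j → i = j := by
    intro v i j hi hj
    by_contra hij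
    exact Finset.disjoint_left.1 (hdisj i j hij) hi hj
  set F : Fin ℓ → Fin ℓ → Finset (V × V) :=
    fun i j => Finset.univ.filter (fun p : V × V => p.1 ∈ P i ∧ p.2 ∈ P j ∧ G.Adj p.1 p.2)
    with hF
  have hE : ∀ i j, eBetween G (P i) (P j) = (F i j).card := by
    intro i j
    rw [eBetween, Nat.card_eq_fintype_card, Fintype.card_subtype]
  -- part sizes
  have hcardpos : ∀ i, 0 < ((P i).card : ℝ) := by
    intro i; exact_mod_cast Finset.card_pos.2 (hne i)
  have hl1 : (0:ℝ) < ((ℓ:ℝ) - 1) ^ 2 := by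
    have : (3:ℝ) ≤ (ℓ:ℝ) := by exact_mod_cast hℓ
    nlinarith
  -- each F i j nonempty for i ≠ j
  have hB : ∀ i j : Fin ℓ, i ≠ j → 1 ≤ (F i j).card := by
    intro i j hij
    have hd := hdens i j hij
    by_contra h
    have h0 : (F i j).card = 0 := by omega
    rw [density, hE i j, h0] at hd
    simp at hd
    have : (0:ℝ) < 1 / ((ℓ:ℝ)-1)^2 := by positivity
    linarith
  -- sum over j ≠ i of e(i,j) ≤ |P i|
  have hC : ∀ i : Fin ℓ, (∑ j ∈ Finset.univ.erase i, (F i j).card) ≤ (P i).card := by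
    intro i
    rw [← Finset.card_biUnion]
    · apply Finset.card_le_card_of_injOn Prod.fst
      · intro p hp
        simp only [Finset.mem_coe, Finset.mem_biUnion, hF, Finset.mem_filter] at hp
        obtain ⟨j, _, _, h1, _, _⟩ := hp
        exact h1
      · intro p hp q hq hpq
        simp only [Finset.coe_biUnion, Set.mem_iUnion, Finset.mem_coe, hF,
          Finset.mem_filter] at hp hq
        obtain ⟨j, _, _, _, _, hadj⟩ := hp
        obtain ⟨j', _, _, _, _, hadj'⟩ := hq
        have : p.2 = q.2 := by
          rw [hpq] at hadj
          exact hM _ _ _ hadj hadj'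
        exact Prod.ext hpq this
    · intro j _ j' _ hjj'
      apply Finset.disjoint_left.2
      intro p hp hp'
      simp only [hF, Finset.mem_filter] at hp hp'
      exact hjj' (hpu hp.2.2.1 hp'.2.2.1)
  -- total count over off-diagonal ≤ |V|
  have hA : (∑ q ∈ (Finset.univ : Finset (Fin ℓ)).offDiag, (F q.1 q.2).card)
      ≤ Fintype.card V := by
    rw [← Finset.card_biUnion]
    · rw [← Finset.card_univ]
      apply Finset.card_le_card_of_injOn Prod.fst
      · intro p _; exact Finset.mem_univ _
      · intro p hp q hq hpq
        simp only [Finset.coe_biUnion, Set.mem_iUnion, Finset.mem_coe, hF,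
          Finset.mem_filter] at hp hq
        obtain ⟨u, _, _, _, _, hadj⟩ := hp
        obtain ⟨u', _, _, _, _, hadj'⟩ := hq
        have : p.2 = q.2 := by
          rw [hpq] at hadj
          exact hM _ _ _ hadj hadj'
        exact Prod.ext hpq this
    · intro q hq q' hq' hqq'
      apply Finset.disjoint_left.2
      intro p hp hp'
      simp only [hF, Finset.mem_filter] at hp hp'
      exact hqq' (Prod.ext (hpu hp.2.1 hp'.2.1) (hpu hp.2.2.1 hp'.2.2.1))
  -- |V| = sum of part sizes
  have hNsum : ∑ i, (P i).card = Fintype.card V := by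
    rw [← Finset.card_biUnion]
    · rw [← Finset.card_univ]
      congr 1
      ext v
      simp only [Finset.mem_biUnion, Finset.mem_univ, true_and, iff_true]
      exact hcov v
    · intro i _ j _ hij; exact hdisj i j hij
  -- lower bound on |V|
  have hNlow : ℓ * ℓ - ℓ ≤ Fintype.card V := by
    calc ℓ * ℓ - ℓ = (Finset.univ : Finset (Fin ℓ)).offDiag.card := by
            rw [Finset.offDiag_card]; simp
      _ = ∑ q ∈ (Finset.univ : Finset (Fin ℓ)).offDiag, 1 := by rw [Finset.sum_const]; ring
      _ ≤ ∑ q ∈ (Finset.univ : Finset (Fin ℓ)).offDiag, (F q.1 q.2).card := by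
            apply Finset.sum_le_sum
            intro q hq
            exact hB q.1 q.2 (Finset.mem_offDiag.1 hq).2.2
      _ ≤ Fintype.card V := hA
  -- real upper bound per part
  have hreal : ∀ i : Fin ℓ, (∑ j ∈ Finset.univ.erase i, ((P j).card : ℝ)) < ((ℓ:ℝ)-1)^2 := by
    intro i
    have key : ((P i).card : ℝ) * (∑ j ∈ Finset.univ.erase i, ((P j).card : ℝ)) / ((ℓ:ℝ)-1)^2
        < ((P i).card : ℝ) := by
      have h1 : ∀ j ∈ Finset.univ.erase i,
          ((P i).card : ℝ) * ((P j).card : ℝ) / ((ℓ:ℝ)-1)^2 < ((F i j).card : ℝ) := by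
        intro j hj
        have hij : i ≠ j := (Finset.ne_of_mem_erase hj).symm
        have hd := hdens i j hij
        rw [density, hE i j] at hd
        have h2 := (div_lt_div_iff₀ hl1 (by positivity : (0:ℝ) < ((P i).card : ℝ) * ((P j).card : ℝ))).1 hd
        rw [div_lt_iff₀ hl1]
        linarith
      have hne' : (Finset.univ.erase i).Nonempty := by
        have : 1 < (Finset.univ : Finset (Fin ℓ)).card := by
          simp only [Finset.card_univ, Fintype.card_fin]; omega
        obtain ⟨j, hj, hji⟩ := Finset.exists_mem_ne this i
        exact ⟨j, Finset.mem_erase.2 ⟨hji, hj⟩⟩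
      calc ((P i).card : ℝ) * (∑ j ∈ Finset.univ.erase i, ((P j).card : ℝ)) / ((ℓ:ℝ)-1)^2
          = ∑ j ∈ Finset.univ.erase i, ((P i).card : ℝ) * ((P j).card : ℝ) / ((ℓ:ℝ)-1)^2 := by
            rw [Finset.mul_sum, Finset.sum_div]
        _ < ∑ j ∈ Finset.univ.erase i, ((F i j).card : ℝ) :=
            Finset.sum_lt_sum_of_nonempty hne' h1
        _ ≤ ((P i).card : ℝ) := by exact_mod_cast hC i
    have hpi := hcardpos i
    rw [div_lt_iff₀ hl1] at key
    nlinarith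
  -- combine
  have hsum2 : ∀ i : Fin ℓ, (∑ j ∈ Finset.univ.erase i, ((P j).card : ℝ))
      = (Fintype.card V : ℝ) - ((P i).card : ℝ) := by
    intro i
    have := Finset.add_sum_erase Finset.univ (fun j => ((P j).card : ℝ)) (Finset.mem_univ i)
    have hN : (∑ j, ((P j).card : ℝ)) = (Fintype.card V : ℝ) := by
      rw [← hNsum]; push_cast; ring
    linarith [this, hN.symm ▸ this]
  have hfin : ((ℓ:ℝ) - 1) * (Fintype.card V : ℝ) < (ℓ:ℝ) * ((ℓ:ℝ)-1)^2 := by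
    have hsumall : (∑ i : Fin ℓ, ((Fintype.card V : ℝ) - ((P i).card : ℝ)))
        < ∑ i : Fin ℓ, ((ℓ:ℝ)-1)^2 := by
      apply Finset.sum_lt_sum_of_nonempty
      · exact ⟨⟨0, by omega⟩, Finset.mem_univ _⟩
      · intro i _; rw [← hsum2 i]; exact hreal i
    have hN : (∑ j : Fin ℓ, ((P j).card : ℝ)) = (Fintype.card V : ℝ) := by
      rw [← hNsum]; push_cast; ring
    rw [Finset.sum_sub_distrib, Finset.sum_const, Finset.sum_const] at hsumall
    simp only [Finset.card_univ, Fintype.card_fin, nsmul_eq_mul] at hsumall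
    rw [hN] at hsumall
    nlinarith
  have hcast : ((ℓ:ℝ) * (ℓ:ℝ) - (ℓ:ℝ)) ≤ (Fintype.card V : ℝ) := by
    have : ((ℓ * ℓ - ℓ : ℕ) : ℝ) ≤ (Fintype.card V : ℝ) := by exact_mod_cast hNlow
    rwa [Nat.cast_sub (Nat.le_mul_of_pos_left ℓ (by omega)), Nat.cast_mul] at this
  have h3 : (3:ℝ) ≤ (ℓ:ℝ) := by exact_mod_cast hℓ
  nlinarith
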